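/- The Rook graph L₂(4) and the Shrikhande graph are not isomorphic: the neighborhood of every vertex in L₂(4) is a disjoint union of two triangles (contains K₃), while the neighborhood of every vertex of the Shrikhande graph induces a 6-cycle. -/

import Mathlib

/-- The Rook graph `L₂(4)` (as `K₄ □ K₄`). -/
def rookGraph : SimpleGraph (Fin 4 × Fin 4) :=
  SimpleGraph.fromRel (fun x y => x.1 = y.1 ∨ x.2 = y.2)

/-- The Shrikhande graph: the Cayley graph on `(ℤ/4ℤ)²` with connection set
`{±(1,0), ±(0,1), ±(1,1)}`. -/
def shrikhandeGraph : SimpleGraph (ZMod 4 × ZMod 4) :=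
  SimpleGraph.fromRel (fun x y =>
    x - y ∈ ({(1, 0), (-1, 0), (0, 1), (0, -1), (1, 1), (-1, -1)} :
      Set (ZMod 4 × ZMod 4)))

instance : DecidableRel shrikhandeGraph.Adj := fun x y =>
  decidable_of_iff (x ≠ y ∧
      ((x - y = (1,0) ∨ x - y = (-1,0) ∨ x - y = (0,1) ∨ x - y = (0,-1) ∨
        x - y = (1,1) ∨ x - y = (-1,-1)) ∨
       (y - x = (1,0) ∨ y - x = (-1,0) ∨ y - x = (0,1) ∨ y - x = (0,-1) ∨
        y - x = (1,1) ∨ y - x = (-1,-1)))) (by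
    simp [shrikhandeGraph, SimpleGraph.fromRel_adj, Set.mem_insert_iff, Set.mem_singleton_iff])

instance : DecidableRel rookGraph.Adj := fun x y =>
  decidable_of_iff (x ≠ y ∧ ((x.1 = y.1 ∨ x.2 = y.2) ∨ (y.1 = x.1 ∨ y.2 = x.2))) (by
    simp [rookGraph, SimpleGraph.fromRel_adj])

lemma shrik_translate (v a b : ZMod 4 × ZMod 4) :
    shrikhandeGraph.Adj (v + a) (v + b) ↔ shrikhandeGraph.Adj a b := by
  simp [shrikhandeGraph, SimpleGraph.fromRel_adj, add_sub_add_left_eq_sub]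

def f6 : Fin 6 → ZMod 4 × ZMod 4 := ![(1,0),(1,1),(0,1),(3,0),(3,3),(0,3)]

lemma f6_mem (i : Fin 6) : f6 i ∈ shrikhandeGraph.neighborSet 0 := by
  fin_cases i <;> decide

noncomputable def g0 : SimpleGraph.cycleGraph 6 ≃g
    shrikhandeGraph.induce (shrikhandeGraph.neighborSet 0) where
  toEquiv := Equiv.ofBijective (fun i => ⟨f6 i, f6_mem i⟩) (by decide)
  map_rel_iff' := by decide

lemma shrik_mem_translate (v x : ZMod 4 × ZMod 4) :
    x ∈ shrikhandeGraph.neighborSet 0 ↔ v + x ∈ shrikhandeGraph.neighborSet v := by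
  have := shrik_translate v 0 x
  simp only [add_zero] at this
  simp [SimpleGraph.mem_neighborSet, this]

/-- Translation isomorphism between induced neighborhoods. -/
noncomputable def trIso (v : ZMod 4 × ZMod 4) :
    shrikhandeGraph.induce (shrikhandeGraph.neighborSet 0) ≃g
    shrikhandeGraph.induce (shrikhandeGraph.neighborSet v) where
  toEquiv := (Equiv.addLeft v).subtypeEquiv (shrik_mem_translate v)
  map_rel_iff' := by
    rintro ⟨a, ha⟩ ⟨b, hb⟩
    exact shrik_translate v a b

lemma cycle6_no_triangle :
    ¬ ∃ a b c : Fin 6, (SimpleGraph.cycleGraph 6).Adj a b ∧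
      (SimpleGraph.cycleGraph 6).Adj b c ∧ (SimpleGraph.cycleGraph 6).Adj a c := by
  decide

open scoped Classical in
/-- The Rook graph `L₂(4)` and the Shrikhande graph are not isomorphic: every
vertex neighborhood of the Rook graph contains a triangle, every vertex
neighborhood of the Shrikhande graph induces a 6-cycle, and there is no graph
isomorphism between the two graphs. -/
theorem rook_shrikhande_not_isomorphic :
    (∀ v : Fin 4 × Fin 4, ∃ a b c,
      a ∈ rookGraph.neighborSet v ∧ b ∈ rookGraph.neighborSet v ∧
        c ∈ rookGraph.neighborSet v ∧
      rookGraph.Adj a b ∧ rookGraph.Adj b c ∧ rookGraph.Adj a c) ∧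
    (∀ v : ZMod 4 × ZMod 4,
      Nonempty (shrikhandeGraph.induce (shrikhandeGraph.neighborSet v) ≃g
        SimpleGraph.cycleGraph 6)) ∧
    ¬ Nonempty (rookGraph ≃g shrikhandeGraph) := by
  have hrook : ∀ v : Fin 4 × Fin 4, ∃ a b c,
      a ∈ rookGraph.neighborSet v ∧ b ∈ rookGraph.neighborSet v ∧
        c ∈ rookGraph.neighborSet v ∧
      rookGraph.Adj a b ∧ rookGraph.Adj b c ∧ rookGraph.Adj a c := by
    decide
  have hcyc : ∀ v : ZMod 4 × ZMod 4,
      Nonempty (shrikhandeGraph.induce (shrikhandeGraph.neighborSet v) ≃g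
        SimpleGraph.cycleGraph 6) := fun v => ⟨g0.symm.comp (trIso v).symm⟩
  refine ⟨hrook, hcyc, ?_⟩
  rintro ⟨φ⟩
  obtain ⟨a, b, c, ha, hb, hc, hab, hbc, hac⟩ := hrook (0, 0)
  set w : ZMod 4 × ZMod 4 := φ (0, 0) with hw
  obtain ⟨e⟩ := hcyc w
  have ha' : φ a ∈ shrikhandeGraph.neighborSet w := φ.map_adj_iff.mpr ha
  have hb' : φ b ∈ shrikhandeGraph.neighborSet w := φ.map_adj_iff.mpr hb
  have hc' : φ c ∈ shrikhandeGraph.neighborSet w := φ.map_adj_iff.mpr hc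
  refine cycle6_no_triangle ⟨e ⟨φ a, ha'⟩, e ⟨φ b, hb'⟩, e ⟨φ c, hc'⟩, ?_, ?_, ?_⟩
  · exact e.map_adj_iff.mpr (by simpa using φ.map_adj_iff.mpr hab)
  · exact e.map_adj_iff.mpr (by simpa using φ.map_adj_iff.mpr hbc)
  · exact e.map_adj_iff.mpr (by simpa using φ.map_adj_iff.mpr hac)
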